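/- Let A ∈ ℝ^{n×n} be a symmetric matrix. There exists a unique real number α such that for every vector x ∈ ℝ^n with nonnegative entries summing to 1, one has min_{1≤i≤n} (Ax)_i ≤ α ≤ max_{1≤i≤n} (Ax)_i. -/

import Mathlib

open Finset Matrix

lemma vNmm_dichotomy (n : ℕ) (hn : 1 ≤ n) (A : Matrix (Fin n) (Fin n) ℝ)
    (hA : A.IsSymm) (v : ℝ) :
    (∃ x ∈ stdSimplex ℝ (Fin n), ∀ i, v ≤ (A *ᵥ x) i) ∨
    (∃ y ∈ stdSimplex ℝ (Fin n), ∀ i, (A *ᵥ y) i < v) := by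
  by_cases h : ∃ x ∈ stdSimplex ℝ (Fin n), ∀ i, v ≤ (A *ᵥ x) i
  · exact Or.inl h
  right
  push_neg at h
  set S : Set (Fin n → ℝ) := A.mulVecLin '' stdSimplex ℝ (Fin n) with hS
  set Q : Set (Fin n → ℝ) := {w | ∀ i, v ≤ w i} with hQ
  have hScv : Convex ℝ S := (convex_stdSimplex ℝ (Fin n)).linear_image A.mulVecLin
  have hScp : IsCompact S :=
    (isCompact_stdSimplex ℝ (Fin n)).image A.mulVecLin.continuous_of_finiteDimensional
  have hQcv : Convex ℝ Q := by
    intro w hw w' hw' a b ha hb hab i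
    have h1 : a * v ≤ a * w i := mul_le_mul_of_nonneg_left (hw i) ha
    have h2 : b * v ≤ b * w' i := mul_le_mul_of_nonneg_left (hw' i) hb
    have : v = a * v + b * v := by rw [← add_mul, hab, one_mul]
    rw [this]
    exact add_le_add h1 h2
  have hQcl : IsClosed Q := by
    have : Q = ⋂ i, {w : Fin n → ℝ | v ≤ w i} := by
      ext w; simp [hQ, Set.mem_iInter]
    rw [this]
    exact isClosed_iInter fun i => isClosed_le continuous_const (continuous_apply i)
  have hdisj : Disjoint S Q := by
    rw [Set.disjoint_left]
    rintro a ⟨x, hx, rfl⟩ haQ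
    obtain ⟨i, hi⟩ := h x hx
    exact absurd (haQ i) (by simpa [Matrix.mulVecLin_apply] using hi.not_ge)
  obtain ⟨f, u, u', hfu, huu', hu'f⟩ :=
    geometric_hahn_banach_compact_closed hScv hScp hQcv hQcl hdisj
  set c : Fin n → ℝ := fun i => f (Pi.single i 1) with hc
  have hf : ∀ w : Fin n → ℝ, f w = ∑ i, w i * c i := by
    intro w
    have hw : w = ∑ i, w i • (Pi.single i 1 : Fin n → ℝ) := by
      ext j
      simp [Pi.single_apply, Finset.sum_ite_eq']
    conv_lhs => rw [hw]
    rw [map_sum]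
    simp [smul_eq_mul]
    rfl
  have hconstv : ∀ t : ℝ, f (fun _ => t) = t * ∑ i, c i := by
    intro t
    rw [hf]
    rw [Finset.mul_sum]
  have hQv : (fun _ => v : Fin n → ℝ) ∈ Q := fun i => le_refl v
  have hcnn : ∀ i, 0 ≤ c i := by
    intro i
    by_contra hci
    push_neg at hci
    set t : ℝ := (f (fun _ => v) - u') / (-c i) with ht
    have hfv : u' < f (fun _ => v) := hu'f _ hQv
    have htpos : 0 < t := div_pos (by linarith) (by linarith)
    have hb : ((fun _ => v) + t • (Pi.single i 1 : Fin n → ℝ)) ∈ Q := by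
      intro j
      by_cases hj : j = i
      · subst hj; simp [Pi.single_apply]; nlinarith
      · simp [Pi.single_apply, hj]
    have := hu'f _ hb
    rw [map_add, _root_.map_smul] at this
    have hti : t * c i = -(f (fun _ => v) - u') := by
      rw [ht, div_neg, neg_mul, div_mul_cancel₀ _ hci.ne]
    rw [smul_eq_mul, hti] at this
    linarith
  set s : ℝ := ∑ i, c i with hsum
  have hx0 : (fun _ => (n:ℝ)⁻¹ : Fin n → ℝ) ∈ stdSimplex ℝ (Fin n) := by
    constructor
    · intro i; positivity
    · simp only [Finset.sum_const, Finset.card_univ, Fintype.card_fin, nsmul_eq_mul]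
      rw [mul_inv_cancel₀]
      exact Nat.cast_ne_zero.mpr (by omega)
  have hspos : 0 < s := by
    rcases (Finset.sum_nonneg fun i _ => hcnn i).lt_or_eq with h' | h'
    · exact h'
    · exfalso
      have hc0 : ∀ i, c i = 0 := by
        intro i
        have := (Finset.sum_eq_zero_iff_of_nonneg fun i _ => hcnn i).mp h'.symm
        exact this i (Finset.mem_univ i)
      have hf0 : ∀ w : Fin n → ℝ, f w = 0 := by
        intro w; rw [hf]; simp [hc0]
      have h1 : f (A.mulVecLin fun _ => (n:ℝ)⁻¹) < u := hfu _ ⟨_, hx0, rfl⟩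
      have h2 : u' < f (fun _ => v) := hu'f _ hQv
      rw [hf0] at h1
      rw [hf0] at h2
      linarith
  set y : Fin n → ℝ := fun i => c i / s with hy
  have hyS : y ∈ stdSimplex ℝ (Fin n) := by
    constructor
    · intro i; exact div_nonneg (hcnn i) hspos.le
    · rw [hy]
      simp only
      rw [← Finset.sum_div, ← hsum, div_self hspos.ne']
  refine ⟨y, hyS, fun j => ?_⟩
  have hej : Pi.single j (1:ℝ) ∈ stdSimplex ℝ (Fin n) := by
    constructor
    · intro i
      by_cases hij : i = j <;> simp [Pi.single_apply, hij]
    · simp [Pi.single_apply, Finset.sum_ite_eq']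
  have hkey : f (A *ᵥ Pi.single j 1) < u := by
    have := hfu _ ⟨_, hej, rfl⟩
    rwa [Matrix.mulVecLin_apply] at this
  have hAe : ∀ i, (A *ᵥ Pi.single j 1) i = A i j := by
    intro i
    simp [Matrix.mulVec, dotProduct, Pi.single_apply, mul_ite, Finset.sum_ite_eq']
  rw [hf] at hkey
  have hkey2 : ∑ i, A j i * c i < v * s := by
    have hfv : u' < f (fun _ => v) := hu'f _ hQv
    rw [hconstv] at hfv
    calc ∑ i, A j i * c i = ∑ i, (A *ᵥ Pi.single j 1) i * c i := by
          refine Finset.sum_congr rfl fun i _ => ?_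
          rw [hAe i, hA.apply i j]
      _ < u := hkey
      _ < v * s := by linarith
  have hAy : (A *ᵥ y) j = (∑ i, A j i * c i) / s := by
    simp only [Matrix.mulVec, dotProduct, hy]
    rw [Finset.sum_div]
    exact Finset.sum_congr rfl fun i _ => (mul_div_assoc _ _ _).symm
  rw [hAy]
  rw [div_lt_iff₀ hspos]
  linarith

/-- Von Neumann's minimax theorem for symmetric matrices: for a symmetric real matrix
`A` there is a unique `α ∈ ℝ` such that every probability vector `x` satisfies
`min_i (A x)_i ≤ α ≤ max_i (A x)_i`. -/
theorem vonNeumann_minimax_symm (n : ℕ) (hn : 1 ≤ n)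
    (A : Matrix (Fin n) (Fin n) ℝ) (hA : A.IsSymm)
    (hne : (Finset.univ : Finset (Fin n)).Nonempty) :
    ∃! α : ℝ, ∀ x : Fin n → ℝ, (∀ i, 0 ≤ x i) → ∑ i, x i = 1 →
      Finset.univ.inf' hne (fun i => (A *ᵥ x) i) ≤ α ∧
      α ≤ Finset.univ.sup' hne (fun i => (A *ᵥ x) i) := by
  -- weak duality: min over one simplex point ≤ max over another
  have key : ∀ x ∈ stdSimplex ℝ (Fin n), ∀ x' ∈ stdSimplex ℝ (Fin n),
      Finset.univ.inf' hne (fun i => (A *ᵥ x) i) ≤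
      Finset.univ.sup' hne (fun i => (A *ᵥ x') i) := by
    intro x hx x' hx'
    have h1 : Finset.univ.inf' hne (fun i => (A *ᵥ x) i) ≤ ∑ j, x' j * (A *ᵥ x) j := by
      calc Finset.univ.inf' hne (fun i => (A *ᵥ x) i)
          = ∑ j, x' j * Finset.univ.inf' hne (fun i => (A *ᵥ x) i) := by
            rw [← Finset.sum_mul, hx'.2, one_mul]
        _ ≤ ∑ j, x' j * (A *ᵥ x) j :=
            Finset.sum_le_sum fun j _ => mul_le_mul_of_nonneg_left
              (Finset.inf'_le _ (Finset.mem_univ j)) (hx'.1 j)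
    have h2 : ∑ i, x i * (A *ᵥ x') i ≤ Finset.univ.sup' hne (fun i => (A *ᵥ x') i) := by
      calc ∑ i, x i * (A *ᵥ x') i
          ≤ ∑ i, x i * Finset.univ.sup' hne (fun i => (A *ᵥ x') i) :=
            Finset.sum_le_sum fun i _ => mul_le_mul_of_nonneg_left
              (Finset.le_sup' _ (Finset.mem_univ i)) (hx.1 i)
        _ = Finset.univ.sup' hne (fun i => (A *ᵥ x') i) := by
            rw [← Finset.sum_mul, hx.2, one_mul]
    have h3 : ∑ j, x' j * (A *ᵥ x) j = ∑ i, x i * (A *ᵥ x') i := by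
      simp only [Matrix.mulVec, dotProduct, Finset.mul_sum]
      rw [Finset.sum_comm]
      refine Finset.sum_congr rfl fun i _ => Finset.sum_congr rfl fun j _ => ?_
      rw [hA.apply i j]
      ring
    linarith
  -- the value
  have hx0 : (fun _ => (n:ℝ)⁻¹ : Fin n → ℝ) ∈ stdSimplex ℝ (Fin n) := by
    constructor
    · intro i; positivity
    · simp only [Finset.sum_const, Finset.card_univ, Fintype.card_fin, nsmul_eq_mul]
      rw [mul_inv_cancel₀]
      exact Nat.cast_ne_zero.mpr (by omega)
  set T : Set ℝ :=
    (fun x => Finset.univ.inf' hne (fun i => (A *ᵥ x) i)) '' stdSimplex ℝ (Fin n) with hT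
  have hTne : T.Nonempty := ⟨_, ⟨_, hx0, rfl⟩⟩
  have hTbdd : BddAbove T := by
    refine ⟨Finset.univ.sup' hne (fun i => (A *ᵥ (fun _ => (n:ℝ)⁻¹)) i), ?_⟩
    rintro m ⟨x, hx, rfl⟩
    exact key x hx _ hx0
  set α : ℝ := sSup T with hα
  have hαvalid : ∀ x : Fin n → ℝ, (∀ i, 0 ≤ x i) → ∑ i, x i = 1 →
      Finset.univ.inf' hne (fun i => (A *ᵥ x) i) ≤ α ∧
      α ≤ Finset.univ.sup' hne (fun i => (A *ᵥ x) i) := by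
    intro x hx1 hx2
    constructor
    · exact le_csSup hTbdd ⟨x, ⟨hx1, hx2⟩, rfl⟩
    · refine csSup_le hTne ?_
      rintro m ⟨x', hx', rfl⟩
      exact key x' hx' x ⟨hx1, hx2⟩
  -- no two distinct values can both be valid
  have notwo : ∀ a b : ℝ,
      (∀ x : Fin n → ℝ, (∀ i, 0 ≤ x i) → ∑ i, x i = 1 →
        Finset.univ.inf' hne (fun i => (A *ᵥ x) i) ≤ a ∧
        a ≤ Finset.univ.sup' hne (fun i => (A *ᵥ x) i)) →
      (∀ x : Fin n → ℝ, (∀ i, 0 ≤ x i) → ∑ i, x i = 1 →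
        Finset.univ.inf' hne (fun i => (A *ᵥ x) i) ≤ b ∧
        b ≤ Finset.univ.sup' hne (fun i => (A *ᵥ x) i)) →
      a < b → False := by
    intro a b ha hb hab
    rcases vNmm_dichotomy n hn A hA ((a + b) / 2) with ⟨x, hx, hge⟩ | ⟨y, hy, hlt⟩
    · have h1 := (ha x hx.1 hx.2).1
      have h2 : (a + b) / 2 ≤ Finset.univ.inf' hne (fun i => (A *ᵥ x) i) :=
        Finset.le_inf' hne _ fun i _ => hge i
      linarith
    · have h1 := (hb y hy.1 hy.2).2
      have h2 : Finset.univ.sup' hne (fun i => (A *ᵥ y) i) < (a + b) / 2 :=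
        (Finset.sup'_lt_iff hne).mpr fun i _ => hlt i
      linarith
  refine ⟨α, hαvalid, fun b hb => ?_⟩
  rcases lt_trichotomy b α with h | h | h
  · exact absurd (notwo b α hb hαvalid h) (fun q => q)
  · exact h
  · exact absurd (notwo α b hαvalid hb h) (fun q => q)
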